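/- Let n be even, let Q, Q', R, R', T, T' ∈ {0,1}^* with (R,T) ≠ (R',T') and all six lengths less than 2^{n/2}. If h_1, h_2 are chosen independently and uniformly at random from {0,1}^n, then Pr[ H_{h_1}(Q,T) ⊕ H_{h_1}(Q',T') ⊕ H_{h_2}(R,T) ⊕ H_{h_2}(R',T') = 0 ] ≤ ℓ / 2^n, where ℓ is the maximum of the degrees of the four hash values viewed as polynomials in h_1 and h_2 (so the left-hand side is a nonzero bivariate polynomial in (h_1, h_2) of total degree at most ℓ). -/

import Mathlib

/-- Integer represented by a bit string (msb-first). -/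
def bitsToNat : List Bool → ℕ
  | [] => 0
  | b :: t => (if b then 2 ^ t.length else 0) + bitsToNat t

/-- An `n`-bit block from a bit string of length at most `n` (msb-first). -/
def blockToBV (n : ℕ) (l : List Bool) : BitVec n := BitVec.ofNat n (bitsToNat l)

/-- `pad`: append zeros on the right to get a full `n`-bit block. -/
def padBlock (n : ℕ) (l : List Bool) : BitVec n :=
  blockToBV n (l ++ List.replicate (n - l.length) false)

/-- `parse_n` followed by padding of the last block. -/
def blocksOf (n : ℕ) (Z : List Bool) : List (BitVec n) :=
  (Z.toChunks n).map (padBlock n)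

/-- Number of `n`-bit blocks obtained from parsing `Z`. -/
def numBlocks (n : ℕ) (Z : List Bool) : ℕ := (Z.toChunks n).length

/-- The length block `bin_{n/2}(|X|) ‖ bin_{n/2}(|T|)`. -/
def xcbLenBlock (n : ℕ) (X T : List Bool) : BitVec n :=
  BitVec.ofNat n (X.length * 2 ^ (n / 2) + T.length)

/-- The XCB hash `H_h(X,T) = X₁h^{m+p+1} ⊕ ⋯ ⊕ pad(X_m)h^{p+2} ⊕ T₁h^{p+1} ⊕ ⋯ ⊕
pad(T_p)h² ⊕ (bin_{n/2}(|X|)‖bin_{n/2}(|T|))h`, computed by Horner evaluation,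
where the equivalence `ι` identifies `{0,1}ⁿ` with `GF(2ⁿ)` (XOR = addition). -/
def xcbHash {n : ℕ} {F : Type*} [Field F] (ι : BitVec n ≃ F) (h : F)
    (X T : List Bool) : F :=
  ((blocksOf n X ++ blocksOf n T).map ι ++ [ι (xcbLenBlock n X T)]).foldl
    (fun acc c => (acc + c) * h) 0

/-! ### Auxiliary chunking lemmas -/

namespace XCBAux
variable {α : Type*}

def myChunks (n : ℕ) : List α → List (List α)
  | [] => []
  | x :: xs => (x :: xs.take (n-1)) :: myChunks n (xs.drop (n-1))
  termination_by l => l.length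
  decreasing_by simp only [List.length_drop, List.length_cons]; omega

lemma myChunks_nil (n : ℕ) : myChunks n ([] : List α) = [] := by simp [myChunks]

lemma myChunks_cons (n : ℕ) (x : α) (xs : List α) :
    myChunks n (x :: xs) = (x :: xs.take (n-1)) :: myChunks n (xs.drop (n-1)) := by
  rw [myChunks]

lemma go_spec (n : ℕ) (hn : 0 < n) : ∀ (xs : List α) (acc₁ : Array α) (acc₂ : Array (List α)),
    0 < acc₁.size → acc₁.size ≤ n →
    List.toChunks.go n xs acc₁ acc₂ =
      acc₂.toList ++ (acc₁.toList ++ xs.take (n - acc₁.size)) ::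
        myChunks n (xs.drop (n - acc₁.size))
  | [], acc₁, acc₂, h1, h2 => by
    simp [List.toChunks.go, myChunks_nil]
  | x :: xs, acc₁, acc₂, h1, h2 => by
    rw [List.toChunks.go]
    by_cases hsz : acc₁.size = n
    · simp only [hsz, beq_self_eq_true, if_true]
      rw [go_spec n hn xs _ _ (by simp) (by simp [Array.size_push]; omega)]
      simp only [Nat.sub_self, List.take_zero, List.drop_zero, myChunks_cons]
      simp [hsz]
    · have hbeq : (acc₁.size == n) = false := by simp [hsz]
      simp only [hbeq, Bool.false_eq_true, if_false]
      rw [go_spec n hn xs _ _ (by simp) (by simp [Array.size_push]; omega)]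
      have hlt : acc₁.size < n := lt_of_le_of_ne h2 hsz
      have h3 : n - acc₁.size = (n - (acc₁.size + 1)) + 1 := by omega
      simp only [Array.size_push, Array.toList_push, h3, List.take_succ_cons,
        List.drop_succ_cons]
      simp
  termination_by xs => xs.length

lemma toChunks_eq_myChunks (n : ℕ) (hn : 0 < n) (l : List α) :
    l.toChunks n = myChunks n l := by
  match l with
  | [] => simp [List.toChunks, myChunks_nil]
  | x :: xs =>
    have h0 : List.toChunks n (x :: xs) = List.toChunks.go n xs #[x] #[] := by
      match n, hn with
      | (n+1), _ => rfl
    rw [h0, go_spec n hn xs #[x] #[] (by simp) (by simp; omega)]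
    simp [myChunks_cons]

lemma myChunks_length_congr (n : ℕ) :
    ∀ (N : ℕ) (l l' : List α), l.length ≤ N → l.length = l'.length →
      (myChunks n l).length = (myChunks n l').length := by
  intro N
  induction N with
  | zero =>
    intro l l' hN hll
    have : l = [] := List.length_eq_zero_iff.mp (by omega)
    have : l' = [] := List.length_eq_zero_iff.mp (by omega)
    subst_vars
    simp_all [List.length_eq_zero_iff.mp]
  | succ N ih =>
    intro l l' hN hll
    match l, l' with
    | [], [] => rfl
    | [], y :: ys => simp at hll
    | x :: xs, [] => simp at hll
    | x :: xs, y :: ys =>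
      rw [myChunks_cons, myChunks_cons]
      simp only [List.length_cons]
      congr 1
      apply ih
      · simp only [List.length_drop]
        simp only [List.length_cons] at hN
        omega
      · simp only [List.length_drop]
        simp only [List.length_cons] at hll
        omega

lemma bitsToNat_lt (l : List Bool) : bitsToNat l < 2 ^ l.length := by
  induction l with
  | nil => simp [bitsToNat]
  | cons b t ih =>
    simp only [bitsToNat, List.length_cons, pow_succ]
    by_cases hb : b <;> simp [hb] <;> omega

lemma bitsToNat_inj : ∀ {l l' : List Bool}, l.length = l'.length →
    bitsToNat l = bitsToNat l' → l = l'
  | [], [], _, _ => rfl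
  | b :: t, b' :: t', hlen, heq => by
    simp only [List.length_cons] at hlen
    have hlen' : t.length = t'.length := by omega
    have h1 := bitsToNat_lt t
    have h2 := bitsToNat_lt t'
    rw [hlen'] at h1
    simp only [bitsToNat, hlen'] at heq
    have hb : b = b' := by
      cases b <;> cases b' <;> simp at heq ⊢ <;> omega
    subst hb
    have : bitsToNat t = bitsToNat t' := by
      cases b <;> simp at heq <;> omega
    rw [bitsToNat_inj hlen' this]

lemma padBlock_inj {n : ℕ} {l l' : List Bool} (hlen : l.length = l'.length)
    (hle : l.length ≤ n) (h : padBlock n l = padBlock n l') : l = l' := by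
  unfold padBlock blockToBV at h
  have e1 : (l ++ List.replicate (n - l.length) false).length = n := by
    simp; omega
  have e2 : (l' ++ List.replicate (n - l'.length) false).length = n := by
    simp; omega
  have v1 := bitsToNat_lt (l ++ List.replicate (n - l.length) false)
  have v2 := bitsToNat_lt (l' ++ List.replicate (n - l'.length) false)
  rw [e1] at v1; rw [e2] at v2
  have := congrArg BitVec.toNat h
  rw [BitVec.toNat_ofNat, BitVec.toNat_ofNat, Nat.mod_eq_of_lt v1, Nat.mod_eq_of_lt v2] at this
  have heq := bitsToNat_inj (by rw [e1, e2]) this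
  exact (List.append_inj heq hlen).1

lemma blocks_inj {n : ℕ} (hn : 0 < n) :
    ∀ (N : ℕ) (l l' : List Bool), l.length ≤ N → l.length = l'.length →
      (myChunks n l).map (padBlock n) = (myChunks n l').map (padBlock n) → l = l' := by
  intro N
  induction N with
  | zero =>
    intro l l' hN hll _
    have h1 : l = [] := List.length_eq_zero_iff.mp (by omega)
    have h2 : l' = [] := List.length_eq_zero_iff.mp (by omega)
    rw [h1, h2]
  | succ N ih =>
    intro l l' hN hll hmap
    match l, l' with
    | [], [] => rfl
    | [], y :: ys => simp at hll
    | x :: xs, [] => simp at hll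
    | x :: xs, y :: ys =>
      rw [myChunks_cons, myChunks_cons] at hmap
      simp only [List.map_cons, List.cons.injEq] at hmap
      obtain ⟨hhd, htl⟩ := hmap
      simp only [List.length_cons] at hN hll
      have hxy : xs.length = ys.length := by omega
      have hlenhd : (x :: xs.take (n-1)).length = (y :: ys.take (n-1)).length := by
        simp; omega
      have hlehd : (x :: xs.take (n-1)).length ≤ n := by
        simp; omega
      have hhd' := padBlock_inj hlenhd hlehd hhd
      have htl' : xs.drop (n-1) = ys.drop (n-1) := by
        apply ih _ _ (by simp; omega) (by simp; omega) htl
      have hx : x = y := by simpa using congrArg (fun t => t.headI) hhd'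
      have htake : xs.take (n-1) = ys.take (n-1) := by
        simpa using congrArg (fun t => t.tail) hhd'
      have : xs = ys := by
        rw [← List.take_append_drop (n-1) xs, ← List.take_append_drop (n-1) ys, htake, htl']
      rw [hx, this]

end XCBAux

/-! ### Horner polynomial lemmas -/

namespace XCBAux
open Polynomial
variable {F : Type*} [Field F]

noncomputable def hPoly (cs : List F) : F[X] :=
  ∑ i ∈ Finset.range cs.length, C (cs.getD i 0) * X ^ (cs.length - i)

lemma hPoly_nil : hPoly ([] : List F) = 0 := by simp [hPoly]

lemma hPoly_cons (c : F) (t : List F) :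
    hPoly (c :: t) = C c * X ^ (t.length + 1) + hPoly t := by
  unfold hPoly
  rw [List.length_cons, Finset.sum_range_succ']
  have h1 : ∀ i : ℕ, (c :: t).getD (i + 1) 0 = t.getD i 0 := fun i => rfl
  simp only [h1, Nat.succ_sub_succ, List.getD_cons_zero, Nat.sub_zero]
  rw [add_comm]

lemma foldl_shift (h : F) : ∀ (cs : List F) (a : F),
    cs.foldl (fun acc c => (acc + c) * h) a =
      a * h ^ cs.length + cs.foldl (fun acc c => (acc + c) * h) 0
  | [], a => by simp
  | c :: t, a => by
    simp only [List.foldl_cons, List.length_cons]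
    rw [foldl_shift h t ((a + c) * h), foldl_shift h t ((0 + c) * h)]
    ring

lemma hPoly_eval (h : F) : ∀ (cs : List F),
    (hPoly cs).eval h = cs.foldl (fun acc c => (acc + c) * h) 0
  | [] => by simp [hPoly_nil]
  | c :: t => by
    rw [hPoly_cons, List.foldl_cons, foldl_shift h t ((0 + c) * h)]
    simp only [eval_add, eval_mul, eval_C, eval_pow, eval_X]
    rw [hPoly_eval h t]
    ring

lemma hPoly_coeff {cs : List F} {i : ℕ} (hi : i < cs.length) :
    (hPoly cs).coeff (cs.length - i) = cs.getD i 0 := by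
  unfold hPoly
  rw [finset_sum_coeff]
  rw [Finset.sum_eq_single i]
  · rw [coeff_C_mul, coeff_X_pow, if_pos rfl, mul_one]
  · intro j hj hji
    rw [coeff_C_mul, coeff_X_pow, if_neg, mul_zero]
    simp only [Finset.mem_range] at hj
    omega
  · intro hi'
    simp [Finset.mem_range, hi] at hi'

lemma hPoly_coeff_zero (cs : List F) : (hPoly cs).coeff 0 = 0 := by
  unfold hPoly
  rw [finset_sum_coeff]
  apply Finset.sum_eq_zero
  intro i hi
  simp only [Finset.mem_range] at hi
  rw [coeff_C_mul, coeff_X_pow, if_neg (by omega), mul_zero]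

lemma hPoly_natDegree_le (cs : List F) : (hPoly cs).natDegree ≤ cs.length := by
  unfold hPoly
  apply Polynomial.natDegree_sum_le_of_forall_le
  intro i hi
  exact (natDegree_C_mul_X_pow_le _ _).trans (Nat.sub_le _ _)

lemma getD_last' {β : Type*} (l1 l2 : List β) (x d : β) :
    (l1 ++ (l2 ++ [x])).getD ((l1 ++ (l2 ++ [x])).length - 1) d = x := by
  rw [List.getD_eq_getElem _ _ (by simp)]
  rw [List.getElem_append_right (by simp), List.getElem_append_right (by simp)]
  simp

end XCBAux

/-! ### Finiteness of BitVec -/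

def bvEquivFin (n : ℕ) : BitVec n ≃ Fin (2^n) where
  toFun := BitVec.toFin
  invFun := BitVec.ofFin
  left_inv := fun _ => rfl
  right_inv := fun _ => rfl

noncomputable instance (n : ℕ) : Fintype (BitVec n) := Fintype.ofEquiv _ (bvEquivFin n).symm

lemma bv_card (n : ℕ) : Fintype.card (BitVec n) = 2^n := by
  rw [Fintype.card_congr (bvEquivFin n)]; simp

theorem xcbHash_bivariate_prob (n : ℕ) (hn : 0 < n) (hEven : Even n)
    (F : Type*) [Field F] (ι : BitVec n ≃ F)
    (hι : ∀ x y : BitVec n, ι (x ^^^ y) = ι x + ι y)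
    (Q Q' R R' T T' : List Bool) (hne : (R, T) ≠ (R', T'))
    (hQ : Q.length < 2 ^ (n / 2)) (hQ' : Q'.length < 2 ^ (n / 2))
    (hR : R.length < 2 ^ (n / 2)) (hR' : R'.length < 2 ^ (n / 2))
    (hT : T.length < 2 ^ (n / 2)) (hT' : T'.length < 2 ^ (n / 2))
    (ℓ : ℕ) (hℓ : ℓ = max
      (max (numBlocks n Q + numBlocks n T + 1) (numBlocks n Q' + numBlocks n T' + 1))
      (max (numBlocks n R + numBlocks n T + 1) (numBlocks n R' + numBlocks n T' + 1))) :
    (Nat.card {hks : BitVec n × BitVec n //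
        xcbHash ι (ι hks.1) Q T + xcbHash ι (ι hks.1) Q' T' +
          xcbHash ι (ι hks.2) R T + xcbHash ι (ι hks.2) R' T' = 0} : ℝ) /
        ((2 : ℝ) ^ n * (2 : ℝ) ^ n) ≤
      (ℓ : ℝ) / ((2 : ℝ) ^ n) := by
  classical
  have hmm : 2 ^ (n / 2) * 2 ^ (n / 2) = 2 ^ n := by
    rw [← pow_add]; congr 1; obtain ⟨k, hk⟩ := hEven; omega
  have hm0 : 0 < 2 ^ (n / 2) := Nat.pow_pos (by omega)
  -- iota facts
  have ι0 : ι (0 : BitVec n) = 0 := by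
    have h := hι 0 0
    simp only [BitVec.xor_self] at h
    exact left_eq_add.mp h
  have ιne : ∀ x y : BitVec n, x ≠ y → ι x + ι y ≠ 0 := by
    intro x y hxy h0
    rw [← hι x y] at h0
    apply hxy
    have hz : x ^^^ y = 0 := ι.injective (h0.trans ι0.symm)
    have := congrArg (· ^^^ y) hz
    simpa [BitVec.xor_assoc] using this
  -- evaluation of the hash as a polynomial
  have hash_eval : ∀ (h : F) (X Y : List Bool),
      xcbHash ι h X Y =
        (XCBAux.hPoly ((blocksOf n X ++ blocksOf n Y ++ [xcbLenBlock n X Y]).map ι)).eval h := by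
    intro h X Y
    rw [XCBAux.hPoly_eval]
    unfold xcbHash
    congr 1
    simp [List.map_append]
  have hblen : ∀ X : List Bool, (blocksOf n X).length = numBlocks n X := by
    intro X; simp [blocksOf, numBlocks]
  have hlen_v : ∀ X Y : List Bool,
      (blocksOf n X ++ blocksOf n Y ++ [xcbLenBlock n X Y]).length =
        numBlocks n X + numBlocks n Y + 1 := by
    intro X Y; simp [blocksOf, numBlocks]; omega
  have hnb : ∀ X X' : List Bool, X.length = X'.length → numBlocks n X = numBlocks n X' := by
    intro X X' h
    unfold numBlocks
    rw [XCBAux.toChunks_eq_myChunks n hn, XCBAux.toChunks_eq_myChunks n hn]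
    exact XCBAux.myChunks_length_congr n X.length X X' le_rfl h
  have hbinj : ∀ X X' : List Bool, X.length = X'.length → blocksOf n X = blocksOf n X' →
      X = X' := by
    intro X X' h hb
    unfold blocksOf at hb
    rw [XCBAux.toChunks_eq_myChunks n hn, XCBAux.toChunks_eq_myChunks n hn] at hb
    exact XCBAux.blocks_inj hn X.length X X' le_rfl h hb
  have hlb : ∀ (A B A' B' : List Bool), A.length < 2 ^ (n / 2) → A'.length < 2 ^ (n / 2) →
      B.length < 2 ^ (n / 2) → B'.length < 2 ^ (n / 2) →
      xcbLenBlock n A B = xcbLenBlock n A' B' → A.length = A'.length ∧ B.length = B'.length := by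
    intro A B A' B' hA hA' hB hB' h
    unfold xcbLenBlock at h
    have hv : ∀ (a b : ℕ), a < 2 ^ (n / 2) → b < 2 ^ (n / 2) →
        a * 2 ^ (n / 2) + b < 2 ^ n := by
      intro a b ha hb
      calc a * 2 ^ (n / 2) + b < a * 2 ^ (n / 2) + 2 ^ (n / 2) := by omega
        _ = (a + 1) * 2 ^ (n / 2) := by ring
        _ ≤ 2 ^ (n / 2) * 2 ^ (n / 2) := Nat.mul_le_mul_right _ (by omega)
        _ = 2 ^ n := hmm
    have heq := congrArg BitVec.toNat h
    rw [BitVec.toNat_ofNat, BitVec.toNat_ofNat, Nat.mod_eq_of_lt (hv _ _ hA hB),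
      Nat.mod_eq_of_lt (hv _ _ hA' hB')] at heq
    have d1 : ∀ (a b : ℕ), b < 2 ^ (n / 2) → (a * 2 ^ (n / 2) + b) / 2 ^ (n / 2) = a := by
      intro a b hb
      rw [add_comm, Nat.add_mul_div_right _ _ hm0, Nat.div_eq_of_lt hb, zero_add]
    have m1 : ∀ (a b : ℕ), b < 2 ^ (n / 2) → (a * 2 ^ (n / 2) + b) % 2 ^ (n / 2) = b := by
      intro a b hb
      rw [add_comm, Nat.add_mul_mod_self_right, Nat.mod_eq_of_lt hb]
    constructor
    · rw [← d1 A.length B.length hB, heq, d1 A'.length B'.length hB']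
    · rw [← m1 A.length B.length hB, heq, m1 A'.length B'.length hB']
  -- the key polynomial
  set v1 : List (BitVec n) := blocksOf n R ++ blocksOf n T ++ [xcbLenBlock n R T] with hv1
  set v2 : List (BitVec n) := blocksOf n R' ++ blocksOf n T' ++ [xcbLenBlock n R' T'] with hv2
  set cs1 : List F := v1.map ι with hcs1
  set cs2 : List F := v2.map ι with hcs2
  set B : Polynomial F := XCBAux.hPoly cs1 + XCBAux.hPoly cs2 with hB
  have hc1len : cs1.length = v1.length := by simp [hcs1]
  have hc2len : cs2.length = v2.length := by simp [hcs2]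
  have hv1len : v1.length = numBlocks n R + numBlocks n T + 1 := hlen_v R T
  have hv2len : v2.length = numBlocks n R' + numBlocks n T' + 1 := hlen_v R' T'
  have hℓ1 : numBlocks n R + numBlocks n T + 1 ≤ ℓ := hℓ ▸ le_max_of_le_right (le_max_left _ _)
  have hℓ2 : numBlocks n R' + numBlocks n T' + 1 ≤ ℓ :=
    hℓ ▸ le_max_of_le_right (le_max_right _ _)
  -- a nonzero coefficient of B in positive degree
  have hwit : ∃ w : ℕ, 0 < w ∧ B.coeff w ≠ 0 := by
    by_cases hl : v1.length = v2.length
    · have hvne : v1 ≠ v2 := by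
        intro he
        rw [hv1, hv2] at he
        obtain ⟨hpre, hsuf⟩ := List.append_inj' he (by simp)
        have hLB : xcbLenBlock n R T = xcbLenBlock n R' T' := by simpa using hsuf
        obtain ⟨hRl, hTl⟩ := hlb R T R' T' hR hR' hT hT' hLB
        have hlenb : (blocksOf n R).length = (blocksOf n R').length := by
          rw [hblen, hblen, hnb R R' hRl]
        obtain ⟨hbR, hbT⟩ := List.append_inj hpre hlenb
        exact hne (by rw [hbinj R R' hRl hbR, hbinj T T' hTl hbT])
      have hex : ∃ i, i < v1.length ∧ v1.getD i 0 ≠ v2.getD i 0 := by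
        by_contra hno
        push_neg at hno
        refine hvne (List.ext_getElem hl (fun i h1 h2 => ?_))
        have := hno i h1
        rwa [List.getD_eq_getElem _ _ h1, List.getD_eq_getElem _ _ h2] at this
      obtain ⟨i, hi, hne2⟩ := hex
      refine ⟨v1.length - i, by omega, ?_⟩
      have c1 : (XCBAux.hPoly cs1).coeff (v1.length - i) = cs1.getD i 0 := by
        rw [← hc1len]
        exact XCBAux.hPoly_coeff (by omega)
      have c2 : (XCBAux.hPoly cs2).coeff (v1.length - i) = cs2.getD i 0 := by
        rw [hl, ← hc2len]
        exact XCBAux.hPoly_coeff (by omega)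
      have g1 : cs1.getD i 0 = ι (v1.getD i 0) := by
        rw [List.getD_eq_getElem _ _ (by omega : i < v1.length), hcs1,
          List.getD_eq_getElem _ _ (by simpa using hi)]
        simp
      have g2 : cs2.getD i 0 = ι (v2.getD i 0) := by
        rw [List.getD_eq_getElem _ _ (by omega : i < v2.length), hcs2,
          List.getD_eq_getElem _ _ (by simp; omega)]
        simp
      rw [hB, Polynomial.coeff_add, c1, c2, g1, g2]
      exact ιne _ _ hne2
    · have hLne : xcbLenBlock n R T ≠ xcbLenBlock n R' T' := by
        intro he
        obtain ⟨hRl, hTl⟩ := hlb R T R' T' hR hR' hT hT' he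
        exact hl (by rw [hv1len, hv2len, hnb R R' hRl, hnb T T' hTl])
      refine ⟨1, one_pos, ?_⟩
      have hp1 : 0 < cs1.length := by rw [hc1len, hv1len]; omega
      have hp2 : 0 < cs2.length := by rw [hc2len, hv2len]; omega
      have c1 : (XCBAux.hPoly cs1).coeff 1 = cs1.getD (cs1.length - 1) 0 := by
        have := XCBAux.hPoly_coeff (cs := cs1) (i := cs1.length - 1) (by omega)
        rwa [Nat.sub_sub_self (by omega : 1 ≤ cs1.length)] at this
      have c2 : (XCBAux.hPoly cs2).coeff 1 = cs2.getD (cs2.length - 1) 0 := by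
        have := XCBAux.hPoly_coeff (cs := cs2) (i := cs2.length - 1) (by omega)
        rwa [Nat.sub_sub_self (by omega : 1 ≤ cs2.length)] at this
      have g1 : cs1.getD (cs1.length - 1) 0 = ι (xcbLenBlock n R T) := by
        rw [hcs1, hv1]
        simp only [List.map_append, List.map_cons, List.map_nil, List.append_assoc]
        exact XCBAux.getD_last' _ _ _ _
      have g2 : cs2.getD (cs2.length - 1) 0 = ι (xcbLenBlock n R' T') := by
        rw [hcs2, hv2]
        simp only [List.map_append, List.map_cons, List.map_nil, List.append_assoc]
        exact XCBAux.getD_last' _ _ _ _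
      rw [hB, Polynomial.coeff_add, c1, c2, g1, g2]
      exact ιne _ _ hLne
  obtain ⟨w, hw0, hwB⟩ := hwit
  -- counting
  have key : ∀ h1 : BitVec n,
      (Finset.univ.filter (fun h2 : BitVec n =>
        xcbHash ι (ι h1) Q T + xcbHash ι (ι h1) Q' T' +
          xcbHash ι (ι h2) R T + xcbHash ι (ι h2) R' T' = 0)).card ≤ ℓ := by
    intro h1
    set c : F := xcbHash ι (ι h1) Q T + xcbHash ι (ι h1) Q' T' with hc
    set q : Polynomial F := B + Polynomial.C c with hq
    have hq0 : q ≠ 0 := by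
      intro h0
      apply hwB
      have h2 := congrArg (fun r => Polynomial.coeff r w) h0
      simp only [hq, Polynomial.coeff_add, Polynomial.coeff_C, Polynomial.coeff_zero] at h2
      rwa [if_neg (by omega), add_zero] at h2
    have hdegB : B.natDegree ≤ ℓ := by
      rw [hB]
      apply (Polynomial.natDegree_add_le _ _).trans
      apply max_le
      · exact (XCBAux.hPoly_natDegree_le _).trans (by rw [hc1len, hv1len]; exact hℓ1)
      · exact (XCBAux.hPoly_natDegree_le _).trans (by rw [hc2len, hv2len]; exact hℓ2)
    have hdegq : q.natDegree ≤ ℓ := by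
      rw [hq]
      apply (Polynomial.natDegree_add_le _ _).trans
      apply max_le hdegB
      simp [Polynomial.natDegree_C]
    calc (Finset.univ.filter (fun h2 : BitVec n =>
        xcbHash ι (ι h1) Q T + xcbHash ι (ι h1) Q' T' +
          xcbHash ι (ι h2) R T + xcbHash ι (ι h2) R' T' = 0)).card
        ≤ q.roots.toFinset.card := by
          apply Finset.card_le_card_of_injOn (fun h2 => ι h2)
          · intro h2 hh2
            simp only [Finset.mem_coe, Finset.mem_filter, Finset.mem_univ, true_and] at hh2 ⊢
            rw [Multiset.mem_toFinset, Polynomial.mem_roots hq0]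
            show q.eval (ι h2) = 0
            rw [hq, Polynomial.eval_add, Polynomial.eval_C, hB, Polynomial.eval_add,
              XCBAux.hPoly_eval, XCBAux.hPoly_eval, hcs1, hcs2, hv1, hv2, hc]
            rw [← XCBAux.hPoly_eval, ← XCBAux.hPoly_eval, ← hash_eval, ← hash_eval]
            linear_combination hh2
          · intro a _ b _ hab
            exact ι.injective hab
      _ ≤ Multiset.card q.roots := q.roots.toFinset_card_le
      _ ≤ q.natDegree := Polynomial.card_roots' q
      _ ≤ ℓ := hdegq
  have hcount : (Nat.card {hks : BitVec n × BitVec n //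
      xcbHash ι (ι hks.1) Q T + xcbHash ι (ι hks.1) Q' T' +
        xcbHash ι (ι hks.2) R T + xcbHash ι (ι hks.2) R' T' = 0}) ≤ 2 ^ n * ℓ := by
    rw [Nat.card_eq_fintype_card, Fintype.card_subtype]
    rw [Finset.card_eq_sum_card_fiberwise
      (f := Prod.fst) (t := Finset.univ) (fun x _ => Finset.mem_univ _)]
    calc ∑ h1 ∈ Finset.univ, (Finset.filter (fun a => a.1 = h1)
          (Finset.filter (fun hks : BitVec n × BitVec n =>
            xcbHash ι (ι hks.1) Q T + xcbHash ι (ι hks.1) Q' T' +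
              xcbHash ι (ι hks.2) R T + xcbHash ι (ι hks.2) R' T' = 0) Finset.univ)).card
        ≤ ∑ _h1 ∈ (Finset.univ : Finset (BitVec n)), ℓ := by
          apply Finset.sum_le_sum
          intro h1 _
          refine le_trans (Finset.card_le_card_of_injOn Prod.snd ?_ ?_) (key h1)
          · intro x hx
            simp only [Finset.mem_coe, Finset.mem_filter, Finset.mem_univ, true_and] at hx ⊢
            obtain ⟨hx1, hx2⟩ := hx
            rw [← hx2]
            exact hx1
          · intro x hx y hy hxy
            simp only [Finset.coe_filter, Set.mem_setOf_eq] at hx hy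
            exact Prod.ext (hx.2.trans hy.2.symm) hxy
      _ = 2 ^ n * ℓ := by
          rw [Finset.sum_const, smul_eq_mul, Finset.card_univ, bv_card]
  -- final arithmetic
  have h2n : (0 : ℝ) < 2 ^ n := by positivity
  rw [div_le_div_iff₀ (by positivity) (by positivity)]
  have hcR : (Nat.card {hks : BitVec n × BitVec n //
      xcbHash ι (ι hks.1) Q T + xcbHash ι (ι hks.1) Q' T' +
        xcbHash ι (ι hks.2) R T + xcbHash ι (ι hks.2) R' T' = 0} : ℝ) ≤ 2 ^ n * ℓ := by
    exact_mod_cast hcount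
  calc (Nat.card {hks : BitVec n × BitVec n //
      xcbHash ι (ι hks.1) Q T + xcbHash ι (ι hks.1) Q' T' +
        xcbHash ι (ι hks.2) R T + xcbHash ι (ι hks.2) R' T' = 0} : ℝ) * 2 ^ n
      ≤ (2 ^ n * ℓ) * 2 ^ n := mul_le_mul_of_nonneg_right hcR h2n.le
    _ = ℓ * ((2 : ℝ) ^ n * 2 ^ n) := by ring
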